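/- Let A be a positive semidefinite symmetric n×n real matrix with A ≠ 0, and let φ : [0,∞) → ℝ be a convex function with φ(0) = 0. Then tr(φ(A)) ≤ (tr(A)/‖A‖) · φ(‖A‖), where ‖A‖ is the operator norm of A and φ(A) is defined by applying φ to the eigenvalues of A. -/

import Mathlib

open Matrix

theorem stmt_3 {n : ℕ} (A : Matrix (Fin n) (Fin n) ℝ) (hA : A.PosSemidef) (hA0 : A ≠ 0)
    (φ : ℝ → ℝ) (hφ : ConvexOn ℝ (Set.Ici 0) φ) (hφ0 : φ 0 = 0) :
    ∑ i, φ (hA.1.eigenvalues i) ≤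
      (A.trace / ‖toEuclideanCLM (𝕜 := ℝ) A‖) * φ ‖toEuclideanCLM (𝕜 := ℝ) A‖ := by
  rcases Nat.eq_zero_or_pos n with hn | hn
  · subst hn
    exact absurd (Subsingleton.elim A 0) hA0
  haveI : Nonempty (Fin n) := Fin.pos_iff_nonempty.mp hn
  set M := ‖toEuclideanCLM (𝕜 := ℝ) A‖ with hM
  have hMpos : 0 < M := by
    rw [hM, norm_pos_iff]
    exact fun h => hA0 (by simpa using (map_eq_zero_iff _
      (EquivLike.injective (toEuclideanCLM (𝕜 := ℝ)))).mp h)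
  have hspec : ∀ i, hA.1.eigenvalues i ∈ spectrum ℝ (toEuclideanCLM (𝕜 := ℝ) A) := by
    intro i
    rw [AlgEquiv.spectrum_eq (toEuclideanCLM (𝕜 := ℝ)) A]
    exact hA.1.eigenvalues_mem_spectrum_real i
  have hle : ∀ i, hA.1.eigenvalues i ≤ M := fun i =>
    (le_abs_self _).trans (by simpa using spectrum.norm_le_norm_of_mem (hspec i))
  have hnn : ∀ i, 0 ≤ hA.1.eigenvalues i := fun i => hA.eigenvalues_nonneg i
  have hφle : ∀ i, φ (hA.1.eigenvalues i) ≤ (hA.1.eigenvalues i / M) * φ M := by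
    intro i
    have h1 : (0:ℝ) ≤ 1 - hA.1.eigenvalues i / M := by
      have : hA.1.eigenvalues i / M ≤ 1 := (div_le_one hMpos).mpr (hle i)
      linarith
    have h2 : (0:ℝ) ≤ hA.1.eigenvalues i / M := div_nonneg (hnn i) hMpos.le
    have := hφ.2 (Set.mem_Ici.mpr le_rfl) (Set.mem_Ici.mpr hMpos.le) h1 h2 (by ring)
    simpa [hφ0, div_mul_cancel₀, hMpos.ne'] using this
  have htr : A.trace = ∑ i, hA.1.eigenvalues i := by
    nth_rewrite 1 [hA.1.spectral_theorem]
    rw [Unitary.conjStarAlgAut_apply]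
    rw [Matrix.trace_mul_cycle]
    rw [Unitary.star_mul_self_of_mem (SetLike.coe_mem _), one_mul]
    simp [Matrix.trace_diagonal]
  calc ∑ i, φ (hA.1.eigenvalues i) ≤ ∑ i, (hA.1.eigenvalues i / M) * φ M :=
        Finset.sum_le_sum fun i _ => hφle i
    _ = (A.trace / M) * φ M := by
        rw [htr, Finset.sum_div, Finset.sum_mul]
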